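/- Let 1 < p < n and let u : ℝⁿ → ℝ be a positive C² function. Setting w = ((n−p)/p)^{(p−1)/p} · u^{−p/(n−p)}, if u satisfies −Δ_p u = u^{np/(n−p) − 1} at points where ∇u ≠ 0, then w satisfies Δ_p w = (n(p−1)/p)·w^{−1}|∇w|^p + w^{−1} at those points. -/

import Mathlib

/-- The `p`-Laplacian `Δ_p f = div(|∇f|^{p-2} ∇f)` on `ℝⁿ`, written coordinatewise. -/
noncomputable def pLap (n : ℕ) (p : ℝ) (f : EuclideanSpace ℝ (Fin n) → ℝ)
    (x : EuclideanSpace ℝ (Fin n)) : ℝ :=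
  ∑ i, fderiv ℝ (fun y => ‖gradient f y‖ ^ (p - 2) * gradient f y i) x
    (EuclideanSpace.single i 1)

open Real

lemma key_algebra (nr p t G : ℝ) (hp1 : 1 < p) (hpn : p < nr) (ht : 0 < t) (hG : 0 < G) :
    (-(((((nr - p)/p) ^ ((p-1)/p)) * (p/(nr-p))) ^ (p-1))) * (((-(p/(nr-p))-1)*(p-1)) * t ^ ((-(p/(nr-p))-1)*(p-1) - 1)) * (G ^ (p-2) * G^2)
      + (-(((((nr - p)/p) ^ ((p-1)/p)) * (p/(nr-p))) ^ (p-1))) * t ^ ((-(p/(nr-p))-1)*(p-1)) * (-(t ^ (nr*p/(nr-p)-1)))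
    = (nr*(p-1)/p) * ((((nr - p)/p) ^ ((p-1)/p)) * t ^ (-(p/(nr-p))))⁻¹ * (((p/(nr-p)) * (((nr - p)/p) ^ ((p-1)/p)) * t ^ (-(p/(nr-p))-1)) * G) ^ p
      + ((((nr - p)/p) ^ ((p-1)/p)) * t ^ (-(p/(nr-p))))⁻¹ := by
  have hp0 : (0:ℝ) < p := lt_trans one_pos hp1
  have hnp : (0:ℝ) < nr - p := by linarith
  have hp0' : p ≠ 0 := ne_of_gt hp0
  have hnp' : nr - p ≠ 0 := ne_of_gt hnp
  have hb : (0:ℝ) < (nr - p)/p := div_pos hnp hp0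
  set b : ℝ := (nr - p)/p with hbdef
  set a : ℝ := p/(nr - p) with hadef
  have ha : 0 < a := div_pos hp0 hnp
  set c : ℝ := b ^ ((p-1)/p) with hcdef
  have hc : 0 < c := rpow_pos_of_pos hb _
  have hab : a = b⁻¹ := by rw [hadef, hbdef]; field_simp
  have hca : (c * a) ^ (p-1) = c⁻¹ := by
    have h1 : c * a = b ^ ((p-1)/p - 1) := by
      rw [rpow_sub hb, rpow_one, hab]; exact (div_eq_mul_inv _ _).symm
    have h2 : ((p-1)/p - 1) * (p-1) = -((p-1)/p) := by field_simp; ring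
    rw [h1, ← rpow_mul hb.le, h2, rpow_neg hb.le]
  have he1 : (-a-1)*(p-1) - 1 = a + (-a-1)*p := by
    rw [hadef]; field_simp; ring
  have hq : t ^ ((-a-1)*(p-1)) * t ^ (nr*p/(nr-p)-1) = t ^ a := by
    rw [← rpow_add ht]
    congr 1
    rw [hadef]; field_simp; ring
  have hwinv : (c * t ^ (-a))⁻¹ = c⁻¹ * t ^ a := by
    rw [mul_inv, ← rpow_neg ht.le, neg_neg]
  have hsecond : (-((c * a) ^ (p-1))) * t ^ ((-a-1)*(p-1)) * (-(t ^ (nr*p/(nr-p)-1)))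
      = (c * t ^ (-a))⁻¹ := by
    rw [hwinv, hca]; linear_combination c⁻¹ * hq
  have hG2 : G ^ (p-2) * G^2 = G ^ p := by
    rw [← rpow_natCast G 2, ← rpow_add hG]; norm_num
  have hcc : c⁻¹ * c ^ p = c ^ (p-1) := by
    rw [← rpow_neg_one c, ← rpow_add hc]; ring_nf
  have haa : a ^ p = a ^ (p-1) * a := by
    rw [← rpow_add_one ha.ne' (p-1)]; ring_nf
  have htt : t ^ a * t ^ ((-a-1)*p) = t ^ ((-a-1)*(p-1) - 1) := by
    rw [← rpow_add ht, ← he1]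
  have hcoef : (a+1)*(p-1) = (nr*(p-1)/p) * a := by
    rw [hadef]; field_simp; ring
  have hfirst : (-((c * a) ^ (p-1))) * (((-a-1)*(p-1)) * t ^ ((-a-1)*(p-1) - 1)) * (G ^ (p-2) * G^2)
      = (nr*(p-1)/p) * (c * t ^ (-a))⁻¹ * ((a * c * t ^ (-a-1)) * G) ^ p := by
    rw [hG2, hwinv]
    rw [mul_rpow (by positivity) hG.le, mul_rpow (by positivity) (rpow_pos_of_pos ht _).le,
        mul_rpow ha.le hc.le, ← rpow_mul ht.le]
    rw [mul_rpow hc.le ha.le]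
    calc (-(c ^ (p-1) * a ^ (p-1))) * (((-a-1)*(p-1)) * t ^ ((-a-1)*(p-1) - 1)) * G ^ p
        = (c ^ (p-1)) * (a ^ (p-1) * a) * (nr*(p-1)/p) * (t ^ a * t ^ ((-a-1)*p)) * G ^ p := by
          rw [htt]
          linear_combination (c ^ (p-1) * a ^ (p-1) * t ^ ((-a-1)*(p-1) - 1) * G ^ p) * hcoef
      _ = (nr*(p-1)/p) * (c⁻¹ * t ^ a) * (a ^ p * c ^ p * t ^ ((-a-1)*p) * G ^ p) := by
          rw [haa, ← hcc]; ring
  rw [← hfirst, ← hsecond]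

/-- if `u > 0` is C² and `-Δ_p u = u^{np/(n-p)-1}` at points where `∇u ≠ 0`,
then `w = ((n-p)/p)^{(p-1)/p} u^{-p/(n-p)}` satisfies
`Δ_p w = (n(p-1)/p) w⁻¹ |∇w|^p + w⁻¹` at those points. -/
theorem change_of_variables_critical (n : ℕ) (p : ℝ) (hp1 : 1 < p) (hpn : p < n)
    (u : EuclideanSpace ℝ (Fin n) → ℝ) (hu : ContDiff ℝ 2 u) (hpos : ∀ x, 0 < u x)
    (heq : ∀ x, gradient u x ≠ 0 →
      -pLap n p u x = u x ^ ((n : ℝ) * p / ((n : ℝ) - p) - 1)) :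
    let w : EuclideanSpace ℝ (Fin n) → ℝ :=
      fun y => (((n : ℝ) - p) / p) ^ ((p - 1) / p) * u y ^ (-(p / ((n : ℝ) - p)))
    ∀ x, gradient u x ≠ 0 →
      pLap n p w x = ((n : ℝ) * (p - 1) / p) * (w x)⁻¹ * ‖gradient w x‖ ^ p + (w x)⁻¹ := by
  intro w x hx
  have hp0 : (0:ℝ) < p := one_pos.trans hp1
  have hnp : (0:ℝ) < (n:ℝ) - p := by linarith
  set a : ℝ := p / ((n:ℝ) - p) with hadef
  set c : ℝ := (((n:ℝ) - p)/p) ^ ((p-1)/p) with hcdef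
  have ha : 0 < a := div_pos hp0 hnp
  have hc : 0 < c := rpow_pos_of_pos (div_pos hnp hp0) _
  have hw : w = fun z => c * u z ^ (-a) := rfl
  set C : ℝ := -((c * a) ^ (p-1)) with hCdef
  set m : ℝ := (-a-1)*(p-1) with hmdef
  have hud : Differentiable ℝ u := hu.differentiable (by norm_num)
  have hgc : ContDiff ℝ 1 (gradient u) := by
    have h1 : ContDiff ℝ 1 (fderiv ℝ u) := hu.fderiv_right (by norm_num)
    exact (InnerProductSpace.toDual ℝ (EuclideanSpace ℝ (Fin n))).symm.contDiff.comp h1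
  -- gradient of w
  have hgw : ∀ y, gradient w y = (c * (-a * u y ^ (-a - 1))) • gradient u y := by
    intro y
    have hF : HasFDerivAt (fun z => u z ^ (-a)) ((-a * u y ^ (-a - 1)) • fderiv ℝ u y) y :=
      (hud y).hasFDerivAt.rpow_const (Or.inl (hpos y).ne')
    have hF2 : HasFDerivAt w (c • ((-a * u y ^ (-a-1)) • fderiv ℝ u y)) y := by
      rw [hw]; exact hF.const_mul c
    rw [hF2.hasGradientAt.gradient]
    simp only [map_smul, smul_smul]
    rfl
  -- norm of gradient of w
  have hnw : ∀ y, ‖gradient w y‖ = a * c * u y ^ (-a-1) * ‖gradient u y‖ := by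
    intro y
    rw [hgw y, norm_smul, Real.norm_eq_abs]
    have hT : (0:ℝ) < u y ^ (-a-1) := rpow_pos_of_pos (hpos y) _
    have hrw : c * (-a * u y ^ (-a - 1)) = -(a * c * u y ^ (-a-1)) := by ring
    rw [hrw, abs_neg, abs_of_pos (mul_pos (mul_pos ha hc) hT)]
  -- the pointwise factorization of the integrand of pLap w
  have hww : ∀ (i : Fin n) (y : EuclideanSpace ℝ (Fin n)),
      ‖gradient w y‖ ^ (p-2) * gradient w y i
      = (C * u y ^ m) * (‖gradient u y‖ ^ (p-2) * gradient u y i) := by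
    intro i y
    have hsy : (0:ℝ) < a * c * u y ^ (-a-1) := mul_pos (mul_pos ha hc) (rpow_pos_of_pos (hpos y) _)
    have hcoord : gradient w y i = (c * (-a * u y ^ (-a - 1))) * gradient u y i := by
      rw [hgw y]; rfl
    rw [hnw y, hcoord, mul_rpow hsy.le (norm_nonneg _)]
    have hs1 : (a * c * u y ^ (-a-1)) ^ (p-2) * (a * c * u y ^ (-a-1)) = (a * c * u y ^ (-a-1)) ^ (p-1) := by
      rw [← rpow_add_one hsy.ne']; congr 1; ring
    have hs2 : (a * c * u y ^ (-a-1)) ^ (p-1) = (c * a) ^ (p-1) * u y ^ m := by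
      rw [mul_rpow (mul_pos ha hc).le (rpow_pos_of_pos (hpos y) _).le,
          ← rpow_mul (hpos y).le, mul_comm a c, hmdef]
    calc (a * c * u y ^ (-a-1)) ^ (p-2) * ‖gradient u y‖ ^ (p-2) * (c * (-a * u y ^ (-a - 1)) * gradient u y i)
        = -(((a * c * u y ^ (-a-1)) ^ (p-2) * (a * c * u y ^ (-a-1))) * (‖gradient u y‖ ^ (p-2) * gradient u y i)) := by ring
      _ = (C * u y ^ m) * (‖gradient u y‖ ^ (p-2) * gradient u y i) := by
          rw [hs1, hs2, hCdef]; ring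
  -- differentiability of the integrand of pLap u at x
  have hHd : ∀ i : Fin n, DifferentiableAt ℝ (fun y => ‖gradient u y‖ ^ (p-2) * gradient u y i) x := by
    intro i
    have h1 : DifferentiableAt ℝ (fun y => ‖gradient u y‖) x :=
      ((hgc.contDiffAt).norm ℝ hx).differentiableAt (by norm_num)
    have h2 : DifferentiableAt ℝ (fun y => ‖gradient u y‖ ^ (p-2)) x :=
      h1.rpow_const (Or.inl (norm_ne_zero_iff.mpr hx))
    have h3 : DifferentiableAt ℝ (fun y => gradient u y i) x := by
      exact
        (EuclideanSpace.proj (𝕜 := ℝ) i).differentiableAt.comp x (hgc.differentiable (by norm_num) x)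
    exact h2.mul h3
  -- derivative of the prefactor
  have hA : HasFDerivAt (fun y => C * u y ^ m) (C • ((m * u x ^ (m-1)) • fderiv ℝ u x)) x :=
    ((hud x).hasFDerivAt.rpow_const (Or.inl (hpos x).ne')).const_mul C
  have hAd : DifferentiableAt ℝ (fun y => C * u y ^ m) x := hA.differentiableAt
  -- coordinates of the gradient
  have hfdu : ∀ i : Fin n, fderiv ℝ u x (EuclideanSpace.single i 1) = gradient u x i := by
    intro i
    have h1 : fderiv ℝ u x (EuclideanSpace.single i 1)
        = (inner ℝ (gradient u x) (EuclideanSpace.single i (1:ℝ)) : ℝ) := by simp [gradient]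
    rw [h1, EuclideanSpace.inner_single_right]; simp
  -- compute pLap w
  have hplap : pLap n p w x
      = C * (m * u x ^ (m-1)) * (‖gradient u x‖ ^ (p-2) * ‖gradient u x‖^2)
        + C * u x ^ m * pLap n p u x := by
    unfold pLap
    have step1 : ∀ i : Fin n,
        fderiv ℝ (fun y => ‖gradient w y‖ ^ (p - 2) * gradient w y i) x (EuclideanSpace.single i 1)
        = C * u x ^ m * fderiv ℝ (fun y => ‖gradient u y‖ ^ (p-2) * gradient u y i) x (EuclideanSpace.single i 1)
          + (‖gradient u x‖ ^ (p-2) * gradient u x i) * (C * ((m * u x ^ (m-1)) * gradient u x i)) := by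
      intro i
      have hfun : (fun y => ‖gradient w y‖ ^ (p - 2) * gradient w y i)
          = fun y => (C * u y ^ m) * (‖gradient u y‖ ^ (p-2) * gradient u y i) := by
        funext y; exact hww i y
      rw [hfun, fderiv_fun_mul hAd (hHd i)]
      rw [ContinuousLinearMap.add_apply, ContinuousLinearMap.smul_apply,
          ContinuousLinearMap.smul_apply, hA.fderiv]
      rw [ContinuousLinearMap.smul_apply, ContinuousLinearMap.smul_apply, hfdu i]
      simp only [smul_eq_mul]
    rw [Finset.sum_congr rfl (fun i _ => step1 i), Finset.sum_add_distrib, ← Finset.mul_sum]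
    have hsq : ∑ i : Fin n, (‖gradient u x‖ ^ (p-2) * gradient u x i) * (C * ((m * u x ^ (m-1)) * gradient u x i))
        = C * (m * u x ^ (m-1)) * (‖gradient u x‖ ^ (p-2) * ‖gradient u x‖^2) := by
      have : ‖gradient u x‖^2 = ∑ i : Fin n, (gradient u x i)^2 := by
        rw [PiLp.norm_sq_eq_of_L2]; simp [sq_abs]
      rw [this, Finset.mul_sum, Finset.mul_sum]
      refine Finset.sum_congr rfl (fun i _ => by ring)
    rw [hsq]; ring
  -- use the equation for u
  have hpu : pLap n p u x = -(u x ^ ((n:ℝ)*p/((n:ℝ)-p) - 1)) := by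
    have := heq x hx; linarith
  have hG : 0 < ‖gradient u x‖ := norm_pos_iff.mpr hx
  have key := key_algebra (n:ℝ) p (u x) ‖gradient u x‖ hp1 hpn (hpos x) hG
  rw [hplap, hpu, hw, hnw x]
  simp only []
  convert key using 2 <;> ring
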